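/- If a set of Wang tiles T admits a valid tiling of ℤ², then the linear system (⋆⋆)' admits a nontrivial nonnegative solution: there exist nonnegative reals x_i, not all zero, indexed by tiles τ_i ∈ T, such that for every generator g ∈ {e₁, e₂} and every color c, the sum of x_i over tiles τ_i with τ_i(g) = c equals the sum of x_j over tiles τ_j with τ_j(g⁻¹) = c. -/

import Mathlib

open Finset Filter Topology

/-- The group element of `ℤ²` corresponding to a direction: `(i, true)` is the
generator `eᵢ`, `(i, false)` its inverse. -/
def dirZ2 : Fin 2 × Bool → ℤ × ℤ
  | (0, true) => (1, 0)
  | (0, false) => (-1, 0)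
  | (1, true) => (0, 1)
  | (1, false) => (0, -1)

/-- The opposite direction. -/
def invDir : Fin 2 × Bool → Fin 2 × Bool
  | (i, b) => (i, !b)

namespace WangAux

/-- The n×n wbox in ℤ². -/
noncomputable def wbox (n : ℕ) : Finset (ℤ × ℤ) := Finset.Ico 0 (n:ℤ) ×ˢ Finset.Ico 0 (n:ℤ)

lemma card_wbox (n : ℕ) : (wbox n).card = n ^ 2 := by
  simp [wbox, Finset.card_product, Int.card_Ico, sq]

lemma card_filter_le {α : Type*} [DecidableEq α] (s t : Finset α) (q : α → Prop)
    [DecidablePred q] : (s.filter q).card ≤ (t.filter q).card + (s \ t).card := by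
  have hsub : s.filter q ⊆ t.filter q ∪ (s \ t) := by
    intro p hp
    simp only [Finset.mem_filter, mem_union, Finset.mem_sdiff] at hp ⊢
    by_cases h : p ∈ t
    · exact Or.inl ⟨h, hp.2⟩
    · exact Or.inr ⟨hp.1, h⟩
  exact (Finset.card_le_card hsub).trans (Finset.card_union_le _ _)

lemma card_filter_shift (q : ℤ × ℤ → Prop) [DecidablePred q] (d : ℤ × ℤ)
    (s : Finset (ℤ × ℤ)) :
    (s.filter fun p => q (p + d)).card = ((s.image (· + d)).filter q).card := by
  rw [Finset.filter_image, Finset.card_image_of_injective _ (add_left_injective d)]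

lemma image_wbox (n : ℕ) (d : ℤ × ℤ) :
    (wbox n).image (· + d) = Finset.Ico d.1 ((n:ℤ) + d.1) ×ˢ Finset.Ico d.2 ((n:ℤ) + d.2) := by
  ext p
  simp only [wbox, mem_image, mem_product, mem_Ico, Prod.ext_iff, Prod.fst_add, Prod.snd_add]
  constructor
  · rintro ⟨q, ⟨⟨h1, h2⟩, h3, h4⟩, h5, h6⟩
    omega
  · rintro ⟨⟨h1, h2⟩, h3, h4⟩
    exact ⟨(p.1 - d.1, p.2 - d.2), ⟨⟨by omega, by omega⟩, by omega, by omega⟩, by omega, by omega⟩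

lemma sdiff_card_le (n : ℕ) (d : ℤ × ℤ) (hd : d = (1,0) ∨ d = (0,1)) :
    ((wbox n).image (· + d) \ wbox n).card ≤ n ∧
    (wbox n \ (wbox n).image (· + d)).card ≤ n := by
  rw [image_wbox]
  rcases hd with rfl | rfl
  · constructor
    · refine (Finset.card_le_card (t := ({(n:ℤ)} : Finset ℤ) ×ˢ Finset.Ico (0:ℤ) n) ?_).trans
        (by simp [Int.card_Ico])
      intro p hp
      simp only [Finset.mem_sdiff, mem_product, mem_Ico, wbox, Finset.mem_singleton] at hp ⊢
      omega
    · refine (Finset.card_le_card (t := ({(0:ℤ)} : Finset ℤ) ×ˢ Finset.Ico (0:ℤ) n) ?_).trans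
        (by simp [Int.card_Ico])
      intro p hp
      simp only [Finset.mem_sdiff, mem_product, mem_Ico, wbox, Finset.mem_singleton] at hp ⊢
      omega
  · constructor
    · refine (Finset.card_le_card (t := Finset.Ico (0:ℤ) n ×ˢ ({(n:ℤ)} : Finset ℤ)) ?_).trans
        (by simp [Int.card_Ico])
      intro p hp
      simp only [Finset.mem_sdiff, mem_product, mem_Ico, wbox, Finset.mem_singleton] at hp ⊢
      omega
    · refine (Finset.card_le_card (t := Finset.Ico (0:ℤ) n ×ˢ ({(0:ℤ)} : Finset ℤ)) ?_).trans
        (by simp [Int.card_Ico])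
      intro p hp
      simp only [Finset.mem_sdiff, mem_product, mem_Ico, wbox, Finset.mem_singleton] at hp ⊢
      omega

lemma sum_cnt {T : Type*} [Fintype T] [DecidableEq T] (x : ℤ × ℤ → T)
    (P : T → Prop) [DecidablePred P] (n : ℕ) :
    ∑ t ∈ Finset.univ.filter P, ((wbox n).filter fun p => x p = t).card
      = ((wbox n).filter fun p => P (x p)).card := by
  rw [Finset.card_eq_sum_card_fiberwise
    (f := x) (t := Finset.univ.filter P)
    (fun p hp => by simp only [Finset.mem_coe, Finset.mem_filter, Finset.mem_univ, true_and] at hp ⊢; exact hp.2)]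
  refine Finset.sum_congr rfl fun t ht => ?_
  simp only [Finset.mem_filter, Finset.mem_univ, true_and] at ht
  rw [Finset.filter_filter]
  congr 1
  apply Finset.filter_congr
  intro p _
  constructor
  · exact fun h => ⟨h ▸ ht, h⟩
  · exact fun h => h.2

/-- The key discrepancy bound: in the n×n wbox, the number of cells whose tile has color
`c` on side `(i, true)` differs from the number with color `c` on side `(i, false)`
by at most `n`. -/
lemma discrepancy {C T : Type*} [DecidableEq C]
    (tile : T → Fin 2 × Bool → C) (x : ℤ × ℤ → T)
    (hx : ∀ (g : ℤ × ℤ) (s : Fin 2 × Bool),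
      tile (x g) s = tile (x (g + dirZ2 s)) (invDir s))
    (n : ℕ) (i : Fin 2) (c : C) :
    ((wbox n).filter fun p => tile (x p) (i, true) = c).card
      ≤ ((wbox n).filter fun p => tile (x p) (i, false) = c).card + n ∧
    ((wbox n).filter fun p => tile (x p) (i, false) = c).card
      ≤ ((wbox n).filter fun p => tile (x p) (i, true) = c).card + n := by
  set d := dirZ2 (i, true) with hd
  have hdval : d = (1,0) ∨ d = (0,1) := by
    fin_cases i
    · exact Or.inl rfl
    · exact Or.inr rfl
  have hrw : ((wbox n).filter fun p => tile (x p) (i, true) = c)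
      = (wbox n).filter fun p => tile (x (p + d)) (i, false) = c := by
    apply Finset.filter_congr
    intro p _
    rw [hx p (i, true)]
    simp [invDir, hd]
  have hshift : ((wbox n).filter fun p => tile (x (p + d)) (i, false) = c).card
      = (((wbox n).image (· + d)).filter fun p => tile (x p) (i, false) = c).card :=
    card_filter_shift (fun p => tile (x p) (i, false) = c) d (wbox n)
  obtain ⟨hs1, hs2⟩ := sdiff_card_le n d hdval
  constructor
  · rw [hrw, hshift]
    exact (card_filter_le ((wbox n).image (· + d)) (wbox n) _).trans (by omega)
  · rw [hrw, hshift]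
    exact (card_filter_le (wbox n) ((wbox n).image (· + d)) _).trans (by omega)

end WangAux

/-- If a finite set of Wang tiles (maps from directions to colors) admits a valid tiling of
`ℤ²`, then condition (⋆⋆)' holds: there is a nontrivial nonnegative solution `w` such that
for each generator and color, the total weight of tiles with that color on that side equals
the total weight of tiles with that color on the opposite side. -/
theorem wang_tiling_Z2_satisfies_starstar' {C T : Type*} [Fintype T] [DecidableEq C]
    (tile : T → Fin 2 × Bool → C) (x : ℤ × ℤ → T)
    (hx : ∀ (g : ℤ × ℤ) (s : Fin 2 × Bool),
      tile (x g) s = tile (x (g + dirZ2 s)) (invDir s)) :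
    ∃ w : T → ℝ, (∀ t, 0 ≤ w t) ∧ (∃ t, w t ≠ 0) ∧
      ∀ (i : Fin 2) (c : C),
        ∑ t ∈ Finset.univ.filter (fun t => tile t (i, true) = c), w t =
          ∑ t ∈ Finset.univ.filter (fun t => tile t (i, false) = c), w t := by
  classical
  open WangAux in
  set cnt : ℕ → T → ℕ := fun n t => ((wbox n).filter fun p => x p = t).card with hcnt
  set u : ℕ → T → ℝ := fun n t => (cnt n t : ℝ) / (n : ℝ) ^ 2 with hu
  -- cnt n t ≤ n^2
  have hcnt_le : ∀ n t, cnt n t ≤ n ^ 2 := fun n t =>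
    (Finset.card_filter_le _ _).trans_eq (card_wbox n)
  have hmem : ∀ n, u n ∈ Set.pi Set.univ (fun _ : T => Set.Icc (0:ℝ) 1) := by
    intro n t _
    rcases Nat.eq_zero_or_pos n with rfl | hn
    · simp [hu]
    · constructor
      · positivity
      · rw [div_le_one (by positivity)]
        exact_mod_cast hcnt_le n t
  obtain ⟨w, _, φ, hφ, hconv⟩ :=
    (isCompact_univ_pi (fun _ : T => isCompact_Icc)).tendsto_subseq hmem
  have hxconv : ∀ t, Tendsto (fun k => u (φ k) t) atTop (𝓝 (w t)) := by
    intro t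
    exact (tendsto_pi_nhds.mp hconv) t
  -- sum over any filter as a normalized count
  have hsumfilter : ∀ (P : T → Prop) [DecidablePred P] (n : ℕ),
      ∑ t ∈ Finset.univ.filter P, u n t
        = (((wbox n).filter fun p => P (x p)).card : ℝ) / (n : ℝ) ^ 2 := by
    intro P _ n
    rw [← Finset.sum_div]
    congr 1
    rw [← Nat.cast_sum]
    congr 1
    simp only [hcnt]
    exact sum_cnt x P n
  -- total sum is 1 for n ≥ 1
  have htotal : ∀ n : ℕ, 1 ≤ n → ∑ t, u n t = 1 := by
    intro n hn
    have := hsumfilter (fun _ => True) n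
    simp only [Finset.filter_true] at this
    rw [this, card_wbox]
    rw [div_eq_one_iff_eq (by positivity)]
    push_cast
    ring
  -- nonnegativity of w
  have hw_nonneg : ∀ t, 0 ≤ w t := by
    intro t
    refine le_of_tendsto_of_tendsto tendsto_const_nhds (hxconv t) ?_
    filter_upwards with k
    positivity
  -- sum of w is 1
  have hw_sum : ∑ t, w t = 1 := by
    have h1 : Tendsto (fun k => ∑ t, u (φ k) t) atTop (𝓝 (∑ t, w t)) :=
      tendsto_finset_sum _ fun t _ => hxconv t
    have h2 : Tendsto (fun k => ∑ t, u (φ k) t) atTop (𝓝 (1:ℝ)) := by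
      apply tendsto_const_nhds.congr'
      filter_upwards [Filter.eventually_ge_atTop 1] with k hk
      exact (htotal (φ k) (hk.trans hφ.le_apply)).symm
    exact tendsto_nhds_unique h1 h2
  refine ⟨w, hw_nonneg, ?_, ?_⟩
  · by_contra h
    push_neg at h
    rw [Finset.sum_congr rfl (fun t _ => h t), Finset.sum_const_zero] at hw_sum
    exact zero_ne_one hw_sum
  · intro i c
    set A : ℕ → ℝ := fun k => ∑ t ∈ Finset.univ.filter (fun t => tile t (i, true) = c), u (φ k) t
    set B : ℕ → ℝ := fun k => ∑ t ∈ Finset.univ.filter (fun t => tile t (i, false) = c), u (φ k) t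
    have hA : Tendsto A atTop
        (𝓝 (∑ t ∈ Finset.univ.filter (fun t => tile t (i, true) = c), w t)) :=
      tendsto_finset_sum _ fun t _ => hxconv t
    have hB : Tendsto B atTop
        (𝓝 (∑ t ∈ Finset.univ.filter (fun t => tile t (i, false) = c), w t)) :=
      tendsto_finset_sum _ fun t _ => hxconv t
    have hbound : ∀ k : ℕ, 1 ≤ k → |A k - B k| ≤ 1 / (k : ℝ) := by
      intro k hk
      have hn : 1 ≤ φ k := hk.trans hφ.le_apply
      set n := φ k with hnk
      have hAval : A k = (((wbox n).filter fun p => tile (x p) (i, true) = c).card : ℝ)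
          / (n : ℝ) ^ 2 := hsumfilter _ n
      have hBval : B k = (((wbox n).filter fun p => tile (x p) (i, false) = c).card : ℝ)
          / (n : ℝ) ^ 2 := hsumfilter _ n
      obtain ⟨hd1, hd2⟩ := discrepancy tile x hx n i c
      have hnpos : (0:ℝ) < (n : ℝ) ^ 2 := by positivity
      rw [hAval, hBval, div_sub_div_same, abs_div, abs_of_pos hnpos]
      have habs : |(((wbox n).filter fun p => tile (x p) (i, true) = c).card : ℝ)
          - (((wbox n).filter fun p => tile (x p) (i, false) = c).card : ℝ)| ≤ (n : ℝ) := by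
        rw [abs_sub_le_iff]
        constructor
        · have h := (Nat.cast_le (α := ℝ)).mpr hd1; push_cast at h; linarith
        · have h := (Nat.cast_le (α := ℝ)).mpr hd2; push_cast at h; linarith
      calc _ ≤ (n : ℝ) / (n : ℝ) ^ 2 := by gcongr
        _ = 1 / (n : ℝ) := by
              rw [sq]
              rw [div_mul_eq_div_div]
              rw [div_self (by positivity : (n:ℝ) ≠ 0)]
        _ ≤ 1 / (k : ℝ) := by
              apply one_div_le_one_div_of_le (by positivity)
              exact_mod_cast hφ.le_apply
    have hdiff0 : Tendsto (fun k => A k - B k) atTop (𝓝 0) := by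
      refine squeeze_zero_norm' ?_ tendsto_one_div_atTop_nhds_zero_nat
      filter_upwards [Filter.eventually_ge_atTop 1] with k hk
      simpa [Real.norm_eq_abs] using hbound k hk
    have hdiff : Tendsto (fun k => A k - B k) atTop
        (𝓝 ((∑ t ∈ Finset.univ.filter (fun t => tile t (i, true) = c), w t)
          - (∑ t ∈ Finset.univ.filter (fun t => tile t (i, false) = c), w t))) :=
      hA.sub hB
    have := tendsto_nhds_unique hdiff hdiff0
    linarith
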